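/- Let t₀ > 0, let T ∈ (0, t₀), let ε ≥ 0, and let b : ℝ → ℝ be a function that is differentiable at every point of [0, T] and satisfies the differential inequality b′(t) ≤ ( ε − b(t) ) / ( 2(t₀ − t) ) for all t ∈ [0, T]. Then b(t) ≤ ε + ( b(0) − ε ) · √( 1 − t/t₀ ) for all t ∈ [0, T]. -/

import Mathlib

open Set

/-- One-dimensional comparison lemma for the normal contraction estimate:
if `b′(t) ≤ (ε − b(t)) / (2(t₀ − t))` on `[0, T]`, then
`b(t) ≤ ε + (b(0) − ε)·√(1 − t/t₀)`. -/
theorem contraction_comparison (t₀ T ε : ℝ) (ht₀ : 0 < t₀) (hT0 : 0 < T) (hT : T < t₀)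
    (hε : 0 ≤ ε) (b : ℝ → ℝ)
    (hdiff : ∀ t ∈ Icc (0 : ℝ) T, DifferentiableAt ℝ b t)
    (hineq : ∀ t ∈ Icc (0 : ℝ) T, deriv b t ≤ (ε - b t) / (2 * (t₀ - t))) :
    ∀ t ∈ Icc (0 : ℝ) T, b t ≤ ε + (b 0 - ε) * Real.sqrt (1 - t / t₀) := by
  set u : ℝ → ℝ := fun t => 1 - t / t₀ with hu
  set s : ℝ → ℝ := fun t => Real.sqrt (u t) with hs
  set g : ℝ → ℝ := fun t => (b t - ε) / s t with hg
  have hupos : ∀ t ∈ Icc (0 : ℝ) T, 0 < u t := by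
    intro t ht
    have : t < t₀ := lt_of_le_of_lt ht.2 hT
    have : t / t₀ < 1 := (div_lt_one ht₀).2 this
    simp only [hu]; linarith
  have hspos : ∀ t ∈ Icc (0 : ℝ) T, 0 < s t := fun t ht => Real.sqrt_pos.2 (hupos t ht)
  -- derivative of g on [0,T]
  have hgderiv : ∀ t ∈ Icc (0 : ℝ) T,
      HasDerivAt g ((deriv b t * s t - (b t - ε) * ((-t₀⁻¹) / (2 * s t))) / s t ^ 2) t := by
    intro t ht
    have hu' : HasDerivAt u (-t₀⁻¹) t := by
      have : HasDerivAt (fun t : ℝ => t / t₀) (1 / t₀) t := (hasDerivAt_id t).div_const t₀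
      simpa [hu, one_div] using this.const_sub 1
    have hs' : HasDerivAt s ((-t₀⁻¹) / (2 * s t)) t := by
      have := hu'.sqrt (ne_of_gt (hupos t ht))
      simpa [hs] using this
    have hb' : HasDerivAt (fun t => b t - ε) (deriv b t) t :=
      ((hdiff t ht).hasDerivAt).sub_const ε
    exact hb'.div hs' (ne_of_gt (hspos t ht))
  -- that derivative is nonpositive
  have hgderiv_nonpos : ∀ t ∈ Icc (0 : ℝ) T,
      (deriv b t * s t - (b t - ε) * ((-t₀⁻¹) / (2 * s t))) / s t ^ 2 ≤ 0 := by
    intro t ht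
    have hS : 0 < s t := hspos t ht
    have hU : 0 < u t := hupos t ht
    have hSq : s t ^ 2 = u t := Real.sq_sqrt hU.le
    have htlt : t < t₀ := lt_of_le_of_lt ht.2 hT
    have hB := hineq t ht
    have hden : (0:ℝ) < 2 * (t₀ - t) := by linarith
    apply div_nonpos_of_nonpos_of_nonneg _ (sq_nonneg _)
    have h1 : deriv b t * s t ≤ (ε - b t) / (2 * (t₀ - t)) * s t :=
      mul_le_mul_of_nonneg_right hB hS.le
    have key : (ε - b t) / (2 * (t₀ - t)) * s t - (b t - ε) * ((-t₀⁻¹) / (2 * s t)) = 0 := by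
      have husub : u t = (t₀ - t) / t₀ := by
        simp only [hu]; field_simp
      have : s t * s t = (t₀ - t) / t₀ := by
        rw [← husub, ← sq, hSq]
      have hclear : t₀ * (s t * s t) = t₀ - t := by
        rw [this]; field_simp
      have hne : t₀ - t ≠ 0 := ne_of_gt (by linarith)
      field_simp
      linear_combination (ε - b t) * hclear
    linarith
  -- g is antitone on [0,T]
  have hganti : AntitoneOn g (Icc 0 T) := by
    apply antitoneOn_of_deriv_nonpos (convex_Icc 0 T)
    · intro t ht
      exact ((hgderiv t ht).differentiableAt).continuousAt.continuousWithinAt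
    · intro t ht
      rw [interior_Icc] at ht
      exact ((hgderiv t (Ioo_subset_Icc_self ht)).differentiableAt).differentiableWithinAt
    · intro t ht
      rw [interior_Icc] at ht
      have ht' := Ioo_subset_Icc_self ht
      rw [(hgderiv t ht').deriv]
      exact hgderiv_nonpos t ht'
  -- conclude
  intro t ht
  have h0 : (0:ℝ) ∈ Icc (0:ℝ) T := ⟨le_refl 0, hT0.le⟩
  have hg0 : g 0 = b 0 - ε := by
    simp [hg, hs, hu]
  have hle : g t ≤ b 0 - ε := hg0 ▸ hganti h0 ht ht.1
  have hS : 0 < s t := hspos t ht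
  have := mul_le_mul_of_nonneg_right hle hS.le
  have hgt : g t * s t = b t - ε := div_mul_cancel₀ _ (ne_of_gt hS)
  rw [hgt] at this
  have : b t - ε ≤ (b 0 - ε) * Real.sqrt (1 - t / t₀) := this
  linarith
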